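/- arXiv:1604.00719 — 2 statements merged into one kernel-verified Lean document; each statement's English description precedes it below -/
import Mathlib

section
/- The space 𝔅 of analytic almost commuting pairs is renormalization invariant: if ζ∈𝔅 is renormalizable (i.e. χ(ζ)<∞), then ℛζ∈𝔅; that is, the renormalization of an almost commuting pair is again an almost commuting pair (non-decreasing interval maps, analytic on neighborhoods of their intervals of definition with single critical points of order 3 at the origin, and commutator vanishing to order strictly higher than 3 at the origin). -/
/-
Common definitions: analytic almost commuting pairs (with complex analytic
extensions), their heights, renormalization, rotation number, the Banach
“manifold” 𝔅^{D,E} of normalized almost commuting pairs (viewed inside the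
real slice of C^ω(D) × C^ω(E)), sup-norm distances, tangent vectors and the
expanding cone.  Maps are encoded as total functions `ℂ → ℂ`; all defining
properties are imposed on the relevant domains.
-/

open Filter Topology Set

noncomputable section

/-- A pair of maps `ζ = (η, ξ)` encoded as total functions `ℂ → ℂ`. -/
abbrev CPair := (ℂ → ℂ) × (ℂ → ℂ)

/-- The real line inside `ℂ`. -/
def realLine : Set ℂ := Set.range Complex.ofReal

/-- The segment `[a,b] ⊆ ℝ ⊆ ℂ`. -/
def realSeg (a b : ℝ) : Set ℂ := Complex.ofReal '' Set.Icc a b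

/-- `f` is real-symmetric: `f(z̄) = f(z)‾` (so `f` preserves `ℝ`). -/
def RealSymm (f : ℂ → ℂ) : Prop := ∀ z, f (starRingEnd ℂ z) = starRingEnd ℂ (f z)

/-- `f` is analytic on an open (complex) neighborhood of the real interval `I`
with a single critical point, of order `3`, at the origin. -/
def CCubic (f : ℂ → ℂ) (I : Set ℝ) : Prop :=
  ∃ U : Set ℂ, IsOpen U ∧ Complex.ofReal '' I ⊆ U ∧ AnalyticOnNhd ℂ f U ∧
    (∀ z ∈ U, z ≠ 0 → deriv f z ≠ 0) ∧
    deriv f 0 = 0 ∧ iteratedDeriv 2 f 0 = 0 ∧ iteratedDeriv 3 f 0 ≠ 0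

/-- An (analytic) almost commuting pair: a pair of non-decreasing interval maps
`η : [0,ξ(0)] → [η(0), η(ξ(0))]`, `ξ : [η(0),0] → [ξ(η(0)), ξ(0)]`,
`η(0) < 0 < ξ(0)`, real-symmetric and analytic on neighborhoods of their
intervals of definition with single cubic critical points at the origin, whose
commutator `[η,ξ](x) = η(ξ(x)) − ξ(η(x))` is `o(x³)` at `x = 0`. -/
structure IsACP (ζ : CPair) : Prop where
  real_η : RealSymm ζ.1
  real_ξ : RealSymm ζ.2
  η0_neg : (ζ.1 0).re < 0
  ξ0_pos : 0 < (ζ.2 0).re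
  mono_η : MonotoneOn (fun x : ℝ => (ζ.1 x).re) (Icc 0 (ζ.2 0).re)
  mono_ξ : MonotoneOn (fun x : ℝ => (ζ.2 x).re) (Icc (ζ.1 0).re 0)
  map_η : MapsTo (fun x : ℝ => (ζ.1 x).re) (Icc 0 (ζ.2 0).re)
            (Icc (ζ.1 0).re (ζ.1 (ζ.2 0)).re)
  map_ξ : MapsTo (fun x : ℝ => (ζ.2 x).re) (Icc (ζ.1 0).re 0)
            (Icc (ζ.2 (ζ.1 0)).re (ζ.2 0).re)
  crit_η : CCubic ζ.1 (Icc 0 (ζ.2 0).re)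
  crit_ξ : CCubic ζ.2 (Icc (ζ.1 0).re 0)
  commut : (fun x : ℝ => ζ.1 (ζ.2 x) - ζ.2 (ζ.1 x)) =o[𝓝 0] fun x : ℝ => x ^ 3

/-- Height `χ(ζ) ∈ ℕ∞`: the `r` with `0 ∈ [η^{r+1}(ξ(0)), η^r(ξ(0))]`,
`⊤` if no such `r` exists. -/
def cheight (ζ : CPair) : ℕ∞ :=
  sInf ((fun r : ℕ => (r : ℕ∞)) ''
    {r : ℕ | (ζ.1^[r+1] (ζ.2 0)).re ≤ 0 ∧ 0 ≤ (ζ.1^[r] (ζ.2 0)).re})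

/-- `ζ` is renormalizable iff `χ(ζ) < ∞`. -/
def CRenormalizable (ζ : CPair) : Prop := cheight ζ ≠ ⊤

/-- Pre-renormalization `pℛζ = (η^r ∘ ξ, η)` (no rescaling). -/
def cpreRenorm (ζ : CPair) : CPair :=
  (fun z => ζ.1^[(cheight ζ).toNat] (ζ.2 z), ζ.1)

/-- Renormalization `ℛζ`: the pre-renormalization conjugated by the linear
rescaling `z ↦ η(0)·z`. -/
def crenorm (ζ : CPair) : CPair :=
  (fun z => ζ.1^[(cheight ζ).toNat] (ζ.2 (ζ.1 0 * z)) / ζ.1 0,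
   fun z => ζ.1 (ζ.1 0 * z) / ζ.1 0)

/-- The heights `rₙ = χ(ℛⁿζ)`. -/
def cheights (ζ : CPair) (n : ℕ) : ℕ∞ := cheight (crenorm^[n] ζ)

/-- `ζ` is at least `n` times renormalizable. -/
def CRenormN (ζ : CPair) (n : ℕ) : Prop := ∀ k < n, cheights ζ k ≠ ⊤

/-- `ζ` is infinitely renormalizable. -/
def CInfRenorm (ζ : CPair) : Prop := ∀ k, cheights ζ k ≠ ⊤

/-- Value of the finite continued fraction `[r₀,r₁,…] = 1/(r₀ + 1/(r₁ + ⋯))`,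
with `1/∞` understood as `0`. -/
def cfVal : List ℕ∞ → ℝ
  | [] => 0
  | r :: rest => if r = ⊤ then 0 else 1 / ((r.toNat : ℝ) + cfVal rest)

/-- The rotation number `ρ(ζ) ∈ [0,1]`: the value of the continued fraction
`[r₀,r₁,…]`, `rᵢ = χ(ℛⁱζ)` (as the limit of its convergents). -/
def crho (ζ : CPair) : ℝ :=
  limUnder atTop fun n : ℕ => cfVal ((List.range n).map (cheights ζ))

/-- A topological disk in `ℂ`. -/
def TopDisk (D : Set ℂ) : Prop := IsOpen D ∧ IsConnected D ∧ SimplyConnectedSpace D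

/-- `f` is bounded on `D`. -/
def BddOn (f : ℂ → ℂ) (D : Set ℂ) : Prop := ∃ M, ∀ z ∈ D, ‖f z‖ ≤ M

/-- `D` is compactly contained in `D'`. -/
def CptIn (D D' : Set ℂ) : Prop := closure D ⊆ D' ∧ IsCompact (closure D)

/-- Membership in the ambient set 𝒲 ⊆ (the real slice of) C^ω(D) × C^ω(E):
real-symmetric pairs, holomorphic and bounded on `D` and `E`, monotone on
their real intervals, with single cubic critical points at the origin and the
normalization `1/(2C₀) < |η(0)| < 2C₀` (no commutation relation imposed). -/
structure InW (D E : Set ℂ) (C₀ : ℝ) (ζ : CPair) : Prop where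
  real_η : RealSymm ζ.1
  real_ξ : RealSymm ζ.2
  holo_η : DifferentiableOn ℂ ζ.1 D
  holo_ξ : DifferentiableOn ℂ ζ.2 E
  bdd_η : BddOn ζ.1 D
  bdd_ξ : BddOn ζ.2 E
  η0_neg : (ζ.1 0).re < 0
  ξ0_pos : 0 < (ζ.2 0).re
  mono_η : MonotoneOn (fun x : ℝ => (ζ.1 x).re) (Icc 0 (ζ.2 0).re)
  mono_ξ : MonotoneOn (fun x : ℝ => (ζ.2 x).re) (Icc (ζ.1 0).re 0)
  crit_η : CCubic ζ.1 (Icc 0 (ζ.2 0).re)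
  crit_ξ : CCubic ζ.2 (Icc (ζ.1 0).re 0)
  domE : realSeg (ζ.1 0).re 0 ⊆ E
  norm_η0_lo : 1 / (2 * C₀) < ‖ζ.1 0‖
  norm_η0_hi : ‖ζ.1 0‖ < 2 * C₀

/-- Membership in `𝔅^{D,E}`: an almost commuting pair whose maps extend to
bounded real-symmetric holomorphic maps on `D` and `E` (with `[η(0),0] ⊆ E`),
normalized by `ξ(0) = 1` and `1/(2C₀) < |η(0)| < 2C₀`. -/
structure MemB (D E : Set ℂ) (C₀ : ℝ) (ζ : CPair) : Prop where
  acp : IsACP ζ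
  holo_η : DifferentiableOn ℂ ζ.1 D
  holo_ξ : DifferentiableOn ℂ ζ.2 E
  bdd_η : BddOn ζ.1 D
  bdd_ξ : BddOn ζ.2 E
  domE : realSeg (ζ.1 0).re 0 ⊆ E
  norm_ξ0 : ζ.2 0 = 1
  norm_η0_lo : 1 / (2 * C₀) < ‖ζ.1 0‖
  norm_η0_hi : ‖ζ.1 0‖ < 2 * C₀

/-- Membership in `𝔄^{D,E}`: bounded real-symmetric holomorphic pairs on `D`,`E`
with commutator `o(z³)` at the origin and `ξ(0) = 1` (no criticality imposed). -/
structure MemA (D E : Set ℂ) (ζ : CPair) : Prop where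
  real_η : RealSymm ζ.1
  real_ξ : RealSymm ζ.2
  holo_η : DifferentiableOn ℂ ζ.1 D
  holo_ξ : DifferentiableOn ℂ ζ.2 E
  bdd_η : BddOn ζ.1 D
  bdd_ξ : BddOn ζ.2 E
  commut : (fun x : ℝ => ζ.1 (ζ.2 x) - ζ.2 (ζ.1 x)) =o[𝓝 0] fun x : ℝ => x ^ 3
  norm_ξ0 : ζ.2 0 = 1

/-- `sup_{z ∈ S} ‖f z‖`. -/
def supOn (f : ℂ → ℂ) (S : Set ℂ) : ℝ := sSup ((fun z => ‖f z‖) '' S)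

/-- The sup-norm distance on `𝔅^{D,E} ⊆ C^ω(D) × C^ω(E)`. -/
def pairDist (D E : Set ℂ) (ζ ζ' : CPair) : ℝ :=
  supOn (fun z => ζ.1 z - ζ'.1 z) D + supOn (fun z => ζ.2 z - ζ'.2 z) E

/-- The sup-norm of a (tangent) pair. -/
def pairNorm (D E : Set ℂ) (v : CPair) : ℝ := supOn v.1 D + supOn v.2 E

/-- `v` is a tangent vector to `𝔅^{D,E}` at `ζ`: the velocity at `t = 0` of a
curve through `ζ` lying in `𝔅^{D,E}`. -/
def IsTangent (D E : Set ℂ) (C₀ : ℝ) (ζ v : CPair) : Prop :=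
  ∃ c : ℝ → CPair, c 0 = ζ ∧ (∀ᶠ t in 𝓝 (0:ℝ), MemB D E C₀ (c t)) ∧
    ∀ z, HasDerivAt (fun t : ℝ => (c t).1 z) (v.1 z) 0 ∧
         HasDerivAt (fun t : ℝ => (c t).2 z) (v.2 z) 0

/-- `v` is a tangent vector to the subset `S` of pairs at `ζ`. -/
def IsTangentToSet (S : Set CPair) (ζ v : CPair) : Prop :=
  ∃ c : ℝ → CPair, c 0 = ζ ∧ (∀ᶠ t in 𝓝 (0:ℝ), c t ∈ S) ∧
    ∀ z, HasDerivAt (fun t : ℝ => (c t).1 z) (v.1 z) 0 ∧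
         HasDerivAt (fun t : ℝ => (c t).2 z) (v.2 z) 0

/-- `∇_{v̄}(pℛ²ζ)(x)`, first component: the derivative at `t = 0` of the first
map of the second pre-renormalization along the curve `ζ + t·v`, at `x`. -/
def gradPR2η (ζ v : CPair) (x : ℝ) : ℝ :=
  deriv (fun t : ℝ => ((cpreRenorm (cpreRenorm (ζ + t • v))).1 x).re) 0

/-- `∇_{v̄}(pℛ²ζ)(x)`, second component. -/
def gradPR2ξ (ζ v : CPair) (x : ℝ) : ℝ :=
  deriv (fun t : ℝ => ((cpreRenorm (cpreRenorm (ζ + t • v))).2 x).re) 0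

/-- The interval of definition `I₂` of the first map of `pℛ²ζ`. -/
def cI2 (ζ : CPair) : Set ℝ := uIcc 0 ((cpreRenorm (cpreRenorm ζ)).2 0).re

/-- The interval of definition `J₂` of the second map of `pℛ²ζ`. -/
def cJ2 (ζ : CPair) : Set ℝ := uIcc 0 ((cpreRenorm (cpreRenorm ζ)).1 0).re

/-- The expanding cone `C_ζ`: tangent vectors `v̄` with
`inf_{x ∈ I₂ ∪ J₂} ∇_{v̄}(pℛ²ζ)(x) > 0`. -/
def InCone (ζ v : CPair) : Prop :=
  ∃ ε > 0, (∀ x ∈ cI2 ζ, ε ≤ gradPR2η ζ v x) ∧ (∀ x ∈ cJ2 ζ, ε ≤ gradPR2ξ ζ v x)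

/-- `inf_{x ∈ I₂ ∪ J₂} ∇_{v̄}(pℛ²ζ)(x)`. -/
def coneEps (ζ v : CPair) : ℝ :=
  sInf ((gradPR2η ζ v '' cI2 ζ) ∪ (gradPR2ξ ζ v '' cJ2 ζ))

/-- The (Gateaux) differential of `ℛ^m` at `ζ` in the direction `v`. -/
def DRen (m : ℕ) (ζ v : CPair) : CPair :=
  (fun z => deriv (fun t : ℝ => (crenorm^[m] (ζ + t • v)).1 z) 0,
   fun z => deriv (fun t : ℝ => (crenorm^[m] (ζ + t • v)).2 z) 0)

/-- Sequential compactness of a set of pairs with respect to the sup-norm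
distance on `C^ω(D) × C^ω(E)`. -/
def SeqCompactB (D E : Set ℂ) (S : Set CPair) : Prop :=
  ∀ u : ℕ → CPair, (∀ j, u j ∈ S) →
    ∃ ζ ∈ S, ∃ φ : ℕ → ℕ, StrictMono φ ∧
      Tendsto (fun j => pairDist D E (u (φ j)) ζ) atTop (𝓝 0)

/-- `l ++ l ++ ⋯ ++ l` (`r` times). -/
def repList {α : Type*} : ℕ → List α → List α
  | 0, _ => []
  | n+1, l => l ++ repList n l

/-- `ζ^{w̄}` for a multi-index `w̄ = (a₁,b₁,…,a_m,b_m)`: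
`ζ^{w̄} = ξ^{b_m} ∘ η^{a_m} ∘ ⋯ ∘ ξ^{b₁} ∘ η^{a₁}` (head of the list acts first). -/
def cApplyWord (ζ : CPair) : List (ℕ × ℕ) → ℂ → ℂ
  | [], z => z
  | p :: rest, z => cApplyWord ζ rest (ζ.2^[p.2] (ζ.1^[p.1] z))

/-- The multi-indices `(s̄ₙ, t̄ₙ)` with `pℛⁿζ = (ζ^{s̄ₙ}|_{Iₙ}, ζ^{t̄ₙ}|_{Jₙ})`,
built from the prescribed sequence of heights `r`. -/
def wordsFrom (r : ℕ → ℕ) : ℕ → List (ℕ × ℕ) × List (ℕ × ℕ)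
  | 0 => ([(1, 0)], [(0, 1)])
  | n+1 =>
    let p := wordsFrom r n
    (p.2 ++ repList (r n) p.1, p.1)

/-- The multi-indices `(s̄ₙ, t̄ₙ)` of the `n`-th pre-renormalization of `ζ`. -/
def cWords (ζ : CPair) : ℕ → List (ℕ × ℕ) × List (ℕ × ℕ) :=
  wordsFrom fun n => (cheights ζ n).toNat

/-- The partial order on multi-indices:  `w̄ ≺ s̄` iff
`w̄ = (a₁,b₁,…,a_k,b_k,c,d)`, `s̄ = (a₁,b₁,…,a_k,b_k,a_{k+1},b_{k+1},…)` with
either `c < a_{k+1}, d = 0`, or `c = a_{k+1}, d < b_{k+1}`. -/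
def wPrec (w s : List (ℕ × ℕ)) : Prop :=
  ∃ (p rest : List (ℕ × ℕ)) (c d a b : ℕ),
    w = p ++ [(c, d)] ∧ s = p ++ (a, b) :: rest ∧
    ((c < a ∧ d = 0) ∨ (c = a ∧ d < b))

/-- `λₙ = (−1)ⁿ|Iₙ|`, where `Iₙ = [0, ζ^{t̄ₙ}(0)]`. -/
def clam (ζ : CPair) (n : ℕ) : ℝ :=
  (-1 : ℝ) ^ n * |(cApplyWord ζ (cWords ζ n).2 0).re|

/-
STATEMENT 4.  The space 𝔅 of analytic almost commuting pairs is
renormalization invariant: if ζ ∈ 𝔅 is renormalizable (χ(ζ) < ∞) then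
ℛζ ∈ 𝔅.
-/
section AuxACP

lemma RealSymm.map_real {f : ℂ → ℂ} (hf : RealSymm f) (x : ℝ) :
    f x = ((f x).re : ℂ) := by
  have h := hf (x : ℂ)
  rw [Complex.conj_ofReal] at h
  exact (Complex.conj_eq_iff_re.mp h.symm).symm

lemma RealSymm.iterate {f : ℂ → ℂ} (hf : RealSymm f) (k : ℕ) : RealSymm f^[k] := by
  induction k with
  | zero => intro z; simp
  | succ n ih => intro z; rw [Function.iterate_succ_apply', Function.iterate_succ_apply', ih z, hf]

lemma iterate_real {f : ℂ → ℂ} (hf : RealSymm f) (k : ℕ) (x : ℝ) :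
    f^[k] (x : ℂ) = (((fun y : ℝ => (f y).re)^[k] x : ℝ) : ℂ) := by
  induction k generalizing x with
  | zero => simp
  | succ n ih =>
    rw [Function.iterate_succ_apply, Function.iterate_succ_apply, hf.map_real x, ih]
    simp

lemma iteratedDeriv_div_const_aux (c : ℂ) (n : ℕ) : ∀ (F : ℂ → ℂ) (x : ℂ),
    iteratedDeriv n (fun z => F z / c) x = iteratedDeriv n F x / c := by
  induction n with
  | zero => intro F x; simp [iteratedDeriv_zero]
  | succ n ih =>
    intro F x
    rw [iteratedDeriv_succ', iteratedDeriv_succ']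
    have : (deriv fun z => F z / c) = fun z => deriv F z / c := funext fun z => deriv_div_const c
    rw [this, ih]

lemma iteratedDeriv_two' (f : ℂ → ℂ) : iteratedDeriv 2 f = deriv (deriv f) := by
  rw [show (2:ℕ) = 1+1 from rfl, iteratedDeriv_succ, iteratedDeriv_one]

lemma iteratedDeriv_three' (f : ℂ → ℂ) : iteratedDeriv 3 f = deriv (deriv (deriv f)) := by
  rw [show (3:ℕ) = 2+1 from rfl, iteratedDeriv_succ, iteratedDeriv_two']

lemma hasDerivAt_comp_const_mul {h : ℂ → ℂ} {c z : ℂ} (hd : DifferentiableAt ℂ h (c * z)) :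
    HasDerivAt (fun w => h (c * w)) (deriv h (c * z) * c) z := by
  have h1 : HasDerivAt (fun w : ℂ => c * w) c z := by
    simpa using (hasDerivAt_id z).const_mul c
  exact (hd.hasDerivAt.comp z h1)

lemma deriv_comp_const_mul_at {h : ℂ → ℂ} {U : Set ℂ} (hA : AnalyticOnNhd ℂ h U) (c : ℂ)
    {z : ℂ} (hz : c * z ∈ U) :
    deriv (fun w => h (c * w)) z = deriv h (c * z) * c :=
  (hasDerivAt_comp_const_mul (hA _ hz).differentiableAt).deriv

lemma iteratedDeriv_comp_const_mul3 {h : ℂ → ℂ} {U : Set ℂ} (hU : IsOpen U)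
    (hA : AnalyticOnNhd ℂ h U) (c : ℂ) (h0 : (0:ℂ) ∈ U) :
    deriv (fun w => h (c * w)) 0 = deriv h 0 * c ∧
    iteratedDeriv 2 (fun w => h (c * w)) 0 = iteratedDeriv 2 h 0 * c^2 ∧
    iteratedDeriv 3 (fun w => h (c * w)) 0 = iteratedDeriv 3 h 0 * c^3 := by
  set W : Set ℂ := (fun w => c * w) ⁻¹' U with hWdef
  have hW : IsOpen W := hU.preimage (continuous_const.mul continuous_id)
  have h0W : (0:ℂ) ∈ W := by simp [hWdef, Set.mem_preimage, h0]
  have hWnhds : W ∈ 𝓝 (0:ℂ) := hW.mem_nhds h0W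
  have ev : ∀ g : ℂ → ℂ, AnalyticOnNhd ℂ g U →
      deriv (fun w => g (c * w)) =ᶠ[𝓝 (0:ℂ)] fun z => deriv g (c * z) * c := by
    intro g hg
    exact Filter.eventuallyEq_of_mem hWnhds fun z hz => deriv_comp_const_mul_at hg c hz
  have e1 : deriv (fun w => h (c * w)) 0 = deriv h 0 * c := by
    have := deriv_comp_const_mul_at hA c (z := 0) (by simpa using h0)
    simpa using this
  refine ⟨e1, ?_, ?_⟩
  · rw [iteratedDeriv_two', iteratedDeriv_two']
    rw [(ev h hA).deriv_eq]
    have : (fun z => deriv h (c * z) * c) = fun z => (fun z => deriv h (c * z)) z * c := rfl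
    rw [this, deriv_mul_const_field, deriv_comp_const_mul_at hA.deriv c (by simpa using h0)]
    simp; ring
  · rw [iteratedDeriv_three', iteratedDeriv_three']
    have E := ev h hA
    rw [E.deriv.deriv_eq]
    have e2 : (deriv fun z => deriv h (c * z) * c) = fun z => deriv (fun z => deriv h (c * z)) z * c :=
      funext fun z => deriv_mul_const_field c
    rw [e2]
    have E2 : (fun z => deriv (fun z => deriv h (c * z)) z * c) =ᶠ[𝓝 (0:ℂ)]
        fun z => deriv (deriv h) (c * z) * c * c := by
      filter_upwards [hWnhds] with z hz
      rw [deriv_comp_const_mul_at hA.deriv c hz]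
    rw [E2.deriv_eq]
    have e3 : (deriv fun z => deriv (deriv h) (c * z) * c * c)
        = fun z => deriv (fun z => deriv (deriv h) (c * z)) z * c * c := by
      funext z
      rw [show (fun z => deriv (deriv h) (c * z) * c * c) = fun z => (fun z => deriv (deriv h) (c * z)) z * (c * c) by funext w; ring,
        deriv_mul_const_field]
      ring
    rw [e3]
    show deriv (fun z => deriv (deriv h) (c * z)) 0 * c * c = _
    rw [deriv_comp_const_mul_at hA.deriv.deriv c (z := 0) (by simpa using h0)]
    simp; ring

lemma cubic_comp {g f : ℂ → ℂ} {U V : Set ℂ} (hUo : IsOpen U)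
    (h0U : (0:ℂ) ∈ U) (hf : AnalyticOnNhd ℂ f U) (hg : AnalyticOnNhd ℂ g V)
    (hmap : Set.MapsTo f U V) (hf1 : deriv f 0 = 0) (hf2 : iteratedDeriv 2 f 0 = 0) :
    deriv (fun z => g (f z)) 0 = 0 ∧ iteratedDeriv 2 (fun z => g (f z)) 0 = 0 ∧
    iteratedDeriv 3 (fun z => g (f z)) 0 = deriv g (f 0) * iteratedDeriv 3 f 0 := by
  have hUn : U ∈ 𝓝 (0:ℂ) := hUo.mem_nhds h0U
  have hf2' : deriv (deriv f) 0 = 0 := by rw [← iteratedDeriv_two']; exact hf2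
  have hc : ∀ z ∈ U, HasDerivAt (fun z => g (f z)) (deriv g (f z) * deriv f z) z := by
    intro z hz
    exact ((hg _ (hmap hz)).differentiableAt.hasDerivAt).comp z
      (hf z hz).differentiableAt.hasDerivAt
  have E : deriv (fun z => g (f z)) =ᶠ[𝓝 (0:ℂ)] fun z => deriv g (f z) * deriv f z :=
    Filter.eventuallyEq_of_mem hUn fun z hz => (hc z hz).deriv
  have first : deriv (fun z => g (f z)) 0 = 0 := by
    rw [(hc 0 h0U).deriv, hf1, mul_zero]
  have hu : ∀ z ∈ U, HasDerivAt (fun z => deriv g (f z) * deriv f z)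
      ((deriv (deriv g) (f z) * deriv f z) * deriv f z + deriv g (f z) * deriv (deriv f) z) z := by
    intro z hz
    have a : HasDerivAt (fun z => deriv g (f z)) (deriv (deriv g) (f z) * deriv f z) z :=
      ((hg.deriv _ (hmap hz)).differentiableAt.hasDerivAt).comp z
        (hf z hz).differentiableAt.hasDerivAt
    have b : HasDerivAt (deriv f) (deriv (deriv f) z) z :=
      (hf.deriv z hz).differentiableAt.hasDerivAt
    exact a.mul b
  refine ⟨first, ?_, ?_⟩
  · rw [iteratedDeriv_two', E.deriv_eq, (hu 0 h0U).deriv, hf1, hf2']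
    ring
  · rw [iteratedDeriv_three', E.deriv.deriv_eq]
    have E2 : deriv (fun z => deriv g (f z) * deriv f z) =ᶠ[𝓝 (0:ℂ)]
        fun z => (deriv (deriv g) (f z) * deriv f z) * deriv f z
          + deriv g (f z) * deriv (deriv f) z :=
      Filter.eventuallyEq_of_mem hUn fun z hz => (hu z hz).deriv
    rw [E2.deriv_eq]
    have hdf := (hf 0 h0U).differentiableAt.hasDerivAt
    have A : HasDerivAt (fun z => deriv (deriv g) (f z))
        (deriv (deriv (deriv g)) (f 0) * deriv f 0) 0 :=
      ((hg.deriv.deriv _ (hmap h0U)).differentiableAt.hasDerivAt).comp 0 hdf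
    have B : HasDerivAt (fun z => deriv g (f z)) (deriv (deriv g) (f 0) * deriv f 0) 0 :=
      ((hg.deriv _ (hmap h0U)).differentiableAt.hasDerivAt).comp 0 hdf
    have C : HasDerivAt (deriv f) (deriv (deriv f) 0) 0 :=
      (hf.deriv 0 h0U).differentiableAt.hasDerivAt
    have D : HasDerivAt (deriv (deriv f)) (deriv (deriv (deriv f)) 0) 0 :=
      (hf.deriv.deriv 0 h0U).differentiableAt.hasDerivAt
    have hv := ((A.mul C).mul C).add (B.mul D)
    rw [show (fun z => deriv (deriv g) (f z) * deriv f z * deriv f z + deriv g (f z) * deriv (deriv f) z) = ((fun z => deriv (deriv g) (f z)) * deriv f * deriv f + (fun z => deriv g (f z)) * deriv (deriv f)) from rfl, hv.deriv, iteratedDeriv_three', hf1, hf2']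
    ring

lemma iterate_analytic_nonvanishing {η : ℂ → ℂ} {U : Set ℂ} (hU : IsOpen U)
    (hA : AnalyticOnNhd ℂ η U) (hd : ∀ z ∈ U, z ≠ 0 → deriv η z ≠ 0)
    (T : Set ℂ) (k : ℕ)
    (hT : ∀ z ∈ T, ∀ j < k, η^[j] z ∈ U ∧ η^[j] z ≠ 0) :
    ∃ V : Set ℂ, IsOpen V ∧ T ⊆ V ∧ AnalyticOnNhd ℂ (η^[k]) V ∧
      ∀ z ∈ V, deriv (η^[k]) z ≠ 0 := by
  induction k with
  | zero =>
    refine ⟨Set.univ, isOpen_univ, subset_univ _, by rw [Function.iterate_zero]; exact analyticOnNhd_id, ?_⟩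
    intro z _
    rw [Function.iterate_zero, deriv_id]
    exact one_ne_zero
  | succ n ih =>
    obtain ⟨V, hVo, hTV, hVan, hVd⟩ := ih fun z hz j hj => hT z hz j (hj.trans n.lt_succ_self)
    set V' : Set ℂ := V ∩ (η^[n]) ⁻¹' (U ∩ {(0:ℂ)}ᶜ) with hV'def
    have hV'o : IsOpen V' :=
      (hVan.continuousOn).isOpen_inter_preimage hVo
        (hU.inter (isOpen_compl_iff.mpr isClosed_singleton))
    have hsucc : η^[n+1] = η ∘ η^[n] := Function.iterate_succ' η n
    refine ⟨V', hV'o, ?_, ?_, ?_⟩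
    · intro z hz
      obtain ⟨h1, h2⟩ := hT z hz n n.lt_succ_self
      exact ⟨hTV hz, by simp [Set.mem_preimage, h1, h2]⟩
    · rw [hsucc]
      intro x hx
      exact (hA _ hx.2.1).comp (hVan x hx.1)
    · intro z hz
      have hder : HasDerivAt (η ∘ η^[n]) (deriv η (η^[n] z) * deriv (η^[n]) z) z :=
        ((hA _ hz.2.1).differentiableAt.hasDerivAt).comp z
          (hVan z hz.1).differentiableAt.hasDerivAt
      rw [hsucc, hder.deriv]
      exact mul_ne_zero (hd _ hz.2.1 hz.2.2) (hVd z hz.1)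

end AuxACP

theorem renormalization_preserves_almost_commuting
    (ζ : CPair) (h : IsACP ζ) (hr : CRenormalizable ζ) :
    IsACP (crenorm ζ) := by
  obtain ⟨hsη, hsξ, hη0, hξ0, hmη, hmξ, hpη, hpξ, hcη, hcξ, hcom⟩ := h
  obtain ⟨Uη, hUηo, hUηsub, hUηan, hUηd, hη1, hη2, hη3⟩ := hcη
  obtain ⟨Uξ, hUξo, hUξsub, hUξan, hUξd, hξ1, hξ2, hξ3⟩ := hcξ
  set ψ : ℝ → ℝ := fun x : ℝ => (ζ.1 x).re with hψdef
  set χ : ℝ → ℝ := fun x : ℝ => (ζ.2 x).re with hχdef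
  set b : ℝ := (ζ.2 0).re with hbdef
  set lam : ℝ := (ζ.1 0).re with hlamdef
  have hb : 0 < b := hξ0
  have hlam : lam < 0 := hη0
  have hlamne : lam ≠ 0 := ne_of_lt hlam
  have hξreal : ζ.2 0 = (b : ℂ) := by
    have h0 := hsξ.map_real 0
    rw [Complex.ofReal_zero] at h0
    rw [h0, hbdef]
  have hηreal : ζ.1 0 = (lam : ℂ) := by
    have h0 := hsη.map_real 0
    rw [Complex.ofReal_zero] at h0
    rw [h0, hlamdef]
  have hlamCne : ζ.1 0 ≠ 0 := by
    rw [hηreal]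
    exact_mod_cast hlamne
  have hiter : ∀ (k : ℕ) (x : ℝ), ζ.1^[k] (x:ℂ) = ((ψ^[k] x : ℝ) : ℂ) := by
    intro k x
    rw [hψdef]
    exact iterate_real hsη k x
  have hχ0 : χ 0 = b := by
    rw [hχdef, hbdef]
    simp
  have hψval : ∀ x : ℝ, ζ.1 (x:ℂ) = ((ψ x : ℝ) : ℂ) := fun x => hsη.map_real x
  have hχval : ∀ x : ℝ, ζ.2 (x:ℂ) = ((χ x : ℝ) : ℂ) := fun x => hsξ.map_real x
  have hbUη : ((b:ℝ):ℂ) ∈ Uη := hUηsub ⟨b, ⟨le_of_lt hb, le_refl b⟩, rfl⟩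
  have h0Uη : ((0:ℝ):ℂ) ∈ Uη := hUηsub ⟨0, ⟨le_refl 0, le_of_lt hb⟩, rfl⟩
  have h0Uξ : ((0:ℝ):ℂ) ∈ Uξ := hUξsub ⟨0, ⟨le_of_lt hlam, le_refl 0⟩, rfl⟩
  have hlamUξ : ((lam:ℝ):ℂ) ∈ Uξ := hUξsub ⟨lam, ⟨le_refl lam, le_of_lt hlam⟩, rfl⟩
  have h0Uη' : (0:ℂ) ∈ Uη := by rwa [Complex.ofReal_zero] at h0Uη
  have h0Uξ' : (0:ℂ) ∈ Uξ := by rwa [Complex.ofReal_zero] at h0Uξ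
  -- the commutation identity at the endpoint
  have c0 : ζ.1 (ζ.2 0) = ζ.2 (ζ.1 0) := by
    set F : ℝ → ℂ := fun x : ℝ => ζ.1 (ζ.2 x) - ζ.2 (ζ.1 x) with hFdef
    have htend : Filter.Tendsto (fun x : ℝ => x ^ 3) (𝓝 0) (𝓝 0) := by
      have := (continuous_pow 3 (M := ℝ)).tendsto 0
      simpa using this
    have hF0 : Filter.Tendsto F (𝓝 0) (𝓝 0) := hcom.isBigO.trans_tendsto htend
    have hbUη : ((b:ℝ):ℂ) ∈ Uη := hUηsub ⟨b, ⟨le_of_lt hb, le_refl b⟩, rfl⟩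
    have h0Uη : ((0:ℝ):ℂ) ∈ Uη := hUηsub ⟨0, ⟨le_refl 0, le_of_lt hb⟩, rfl⟩
    have h0Uξ : ((0:ℝ):ℂ) ∈ Uξ := hUξsub ⟨0, ⟨le_of_lt hlam, le_refl 0⟩, rfl⟩
    have hlamUξ : ((lam:ℝ):ℂ) ∈ Uξ := hUξsub ⟨lam, ⟨le_refl lam, le_of_lt hlam⟩, rfl⟩
    have hFc : ContinuousAt F 0 := by
      have c1 : ContinuousAt (fun x : ℝ => ζ.1 (ζ.2 x)) 0 := by
        have hc2 : ContinuousAt ζ.2 ((0:ℝ):ℂ) := (hUξan _ h0Uξ).continuousAt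
        have hc1 : ContinuousAt ζ.1 (ζ.2 ((0:ℝ):ℂ)) := by
          rw [show ζ.2 ((0:ℝ):ℂ) = ((b:ℝ):ℂ) by rw [Complex.ofReal_zero, hξreal]]
          exact (hUηan _ hbUη).continuousAt
        exact (hc1.comp hc2).comp Complex.continuous_ofReal.continuousAt
      have c2 : ContinuousAt (fun x : ℝ => ζ.2 (ζ.1 x)) 0 := by
        have hc2 : ContinuousAt ζ.1 ((0:ℝ):ℂ) := (hUηan _ h0Uη).continuousAt
        have hc1 : ContinuousAt ζ.2 (ζ.1 ((0:ℝ):ℂ)) := by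
          rw [show ζ.1 ((0:ℝ):ℂ) = ((lam:ℝ):ℂ) by rw [Complex.ofReal_zero, hηreal]]
          exact (hUξan _ hlamUξ).continuousAt
        exact (hc1.comp hc2).comp Complex.continuous_ofReal.continuousAt
      exact c1.sub c2
    have : F 0 = 0 := tendsto_nhds_unique hFc.tendsto hF0
    rw [hFdef] at this
    simp only [Complex.ofReal_zero, sub_eq_zero] at this
    exact this
  have hχlam : χ lam = ψ b := by
    rw [hχdef, hψdef]
    simp only
    rw [← hξreal, ← hηreal, c0]
  have hψb_le : ψ b ≤ b := by
    rw [← hχlam, ← hχ0]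
    exact hmξ ⟨le_refl lam, le_of_lt hlam⟩ ⟨le_of_lt hlam, le_refl 0⟩ (le_of_lt hlam)
  -- the height
  have hSmem : ∀ k : ℕ, (k ∈ {r : ℕ | (ζ.1^[r+1] (ζ.2 0)).re ≤ 0 ∧ 0 ≤ (ζ.1^[r] (ζ.2 0)).re})
      ↔ (ψ^[k+1] b ≤ 0 ∧ 0 ≤ ψ^[k] b) := by
    intro k
    rw [Set.mem_setOf_eq, hξreal, hiter, hiter]
    simp
  set S : Set ℕ := {r : ℕ | (ζ.1^[r+1] (ζ.2 0)).re ≤ 0 ∧ 0 ≤ (ζ.1^[r] (ζ.2 0)).re} with hSdef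
  have hSne : S.Nonempty := by
    by_contra hS
    rw [Set.not_nonempty_iff_eq_empty] at hS
    apply hr
    rw [CRenormalizable, cheight] at *
    rw [← hSdef, hS]
    simp
  set r : ℕ := sInf S with hrdef
  have hrS : ψ^[r+1] b ≤ 0 ∧ 0 ≤ ψ^[r] b := (hSmem r).mp (Nat.sInf_mem hSne)
  have hmin : ∀ k, k < r → ¬(ψ^[k+1] b ≤ 0 ∧ 0 ≤ ψ^[k] b) := by
    intro k hk hmem
    exact Nat.notMem_of_lt_sInf hk ((hSmem k).mpr hmem)
  have hcheight : cheight ζ = (r : ℕ∞) := by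
    rw [cheight, ← hSdef]
    apply le_antisymm
    · exact sInf_le ⟨r, Nat.sInf_mem hSne, rfl⟩
    · apply le_sInf
      rintro a ⟨k, hk, rfl⟩
      show (r:ℕ∞) ≤ (k:ℕ∞)
      rw [hrdef]
      exact_mod_cast Nat.sInf_le hk
  have htoNat : (cheight ζ).toNat = r := by rw [hcheight]; rfl
  -- orbit facts
  have F1 : ∀ k, k ≤ r → 0 < ψ^[k] b := by
    intro k
    induction k with
    | zero => intro _; simpa using hb
    | succ n ih =>
      intro hn
      have hlt : n < r := hn
      have := hmin n hlt
      have hpos := ih (le_of_lt hlt)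
      by_contra hle
      push_neg at hle
      exact this ⟨hle, le_of_lt hpos⟩
  have DEC : ∀ j, j ≤ r → ψ^[j+1] b ≤ ψ^[j] b ∧ ψ^[j] b ≤ b := by
    intro j
    induction j with
    | zero => intro _; simpa using hψb_le
    | succ n ih =>
      intro hn
      have hn' : n ≤ r := le_of_lt hn
      obtain ⟨ih1, ih2⟩ := ih hn'
      have h1 : ψ^[n+1] b ∈ Set.Icc (0:ℝ) b := ⟨le_of_lt (F1 _ hn), le_trans ih1 ih2⟩
      have h2 : ψ^[n] b ∈ Set.Icc (0:ℝ) b := ⟨le_of_lt (F1 _ hn'), ih2⟩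
      constructor
      · have hm := hmη h1 h2 ih1
        rw [← Function.iterate_succ_apply' ψ n b, ← Function.iterate_succ_apply' ψ (n+1) b] at hm
        exact hm
      · exact le_trans ih1 ih2
  have MONO : ∀ k, k ≤ r → ∀ x y : ℝ, ψ b ≤ x → x ≤ y → y ≤ b →
      ψ^[k+1] b ≤ ψ^[k] x ∧ ψ^[k] x ≤ ψ^[k] y ∧ ψ^[k] y ≤ ψ^[k] b := by
    intro k
    induction k with
    | zero =>
      intro _ x y h1 h2 h3
      simpa using ⟨h1, h2, h3⟩
    | succ n ih =>
      intro hn x y h1 h2 h3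
      have hn' : n ≤ r := le_of_lt hn
      obtain ⟨i1, i2, i3⟩ := ih hn' x y h1 h2 h3
      have hnp1 : 0 < ψ^[n+1] b := F1 _ hn
      have hnb : ψ^[n] b ≤ b := (DEC n hn').2
      have m1 : ψ^[n+1] b ∈ Set.Icc (0:ℝ) b := ⟨le_of_lt hnp1, le_trans (DEC n hn').1 hnb⟩
      have m2 : ψ^[n] x ∈ Set.Icc (0:ℝ) b :=
        ⟨le_trans (le_of_lt hnp1) i1, le_trans i2 (le_trans i3 hnb)⟩
      have m3 : ψ^[n] y ∈ Set.Icc (0:ℝ) b := ⟨le_trans (le_of_lt hnp1) (le_trans i1 i2), le_trans i3 hnb⟩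
      have m4 : ψ^[n] b ∈ Set.Icc (0:ℝ) b := ⟨le_trans (le_of_lt hnp1) (le_trans i1 (le_trans i2 i3)), hnb⟩
      refine ⟨?_, ?_, ?_⟩
      · have hm := hmη m1 m2 i1
        rw [← Function.iterate_succ_apply' ψ n x, ← Function.iterate_succ_apply' ψ (n+1) b] at hm
        exact hm
      · have hm := hmη m2 m3 i2
        rw [← Function.iterate_succ_apply' ψ n x, ← Function.iterate_succ_apply' ψ n y] at hm
        exact hm
      · have hm := hmη m3 m4 i3
        rw [← Function.iterate_succ_apply' ψ n y, ← Function.iterate_succ_apply' ψ n b] at hm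
        exact hm
  -- function formulas for the renormalization
  have hfun1 : (crenorm ζ).1 = fun z => ζ.1^[r] (ζ.2 (ζ.1 0 * z)) / ζ.1 0 := by
    rw [crenorm, htoNat]
  have hfun2 : (crenorm ζ).2 = fun z => ζ.1 (ζ.1 0 * z) / ζ.1 0 := by
    rw [crenorm]
  have hmulre : ∀ x : ℝ, ζ.1 0 * (x:ℂ) = ((lam * x : ℝ) : ℂ) := by
    intro x
    rw [hηreal, Complex.ofReal_mul]
  have hval1 : ∀ x : ℝ, (crenorm ζ).1 (x:ℂ) = ((ψ^[r] (χ (lam * x)) / lam : ℝ) : ℂ) := by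
    intro x
    rw [hfun1]
    simp only
    rw [hmulre, hχval, hiter, hηreal, Complex.ofReal_div]
  have hval2 : ∀ x : ℝ, (crenorm ζ).2 (x:ℂ) = ((ψ (lam * x) / lam : ℝ) : ℂ) := by
    intro x
    rw [hfun2]
    simp only
    rw [hmulre, hψval, hηreal, Complex.ofReal_div]
  have hR20 : (crenorm ζ).2 0 = 1 := by
    rw [hfun2]
    simp only [mul_zero]
    exact div_self hlamCne
  have hR20re : ((crenorm ζ).2 0).re = 1 := by rw [hR20]; rfl
  have hR10 : (crenorm ζ).1 0 = ((ψ^[r] b / lam : ℝ) : ℂ) := by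
    have := hval1 0
    rw [Complex.ofReal_zero] at this
    rw [this, mul_zero, hχ0]
  have hR10re : ((crenorm ζ).1 0).re = ψ^[r] b / lam := by
    rw [hR10, Complex.ofReal_re]
  have hAneg : ψ^[r] b / lam < 0 := div_neg_of_pos_of_neg (F1 r (le_refl r)) hlam
  -- interval fact for the first map's inner composition
  have hχmem : ∀ x : ℝ, 0 ≤ x → x ≤ 1 → ψ b ≤ χ (lam * x) ∧ χ (lam * x) ≤ b := by
    intro x h0 h1
    have hmem : lam * x ∈ Set.Icc lam 0 := by
      constructor
      · nlinarith
      · exact mul_nonpos_of_nonpos_of_nonneg (le_of_lt hlam) h0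
    constructor
    · rw [← hχlam]
      exact hmξ ⟨le_refl lam, le_of_lt hlam⟩ hmem hmem.1
    · rw [← hχ0]
      exact hmξ hmem ⟨le_of_lt hlam, le_refl 0⟩ hmem.2
  have hlmem : ∀ x : ℝ, 0 ≤ x → x ≤ 1 → lam * x ∈ Set.Icc lam 0 := by
    intro x h0 h1
    constructor
    · nlinarith
    · exact mul_nonpos_of_nonpos_of_nonneg (le_of_lt hlam) h0
  have hconjlam : (starRingEnd ℂ) (ζ.1 0) = ζ.1 0 := by rw [hηreal, Complex.conj_ofReal]
  have hmonoR1 : MonotoneOn (fun x : ℝ => ((crenorm ζ).1 (x:ℂ)).re) (Set.Icc (0:ℝ) 1) := by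
    intro x hx y hy hxy
    show ((crenorm ζ).1 (x:ℂ)).re ≤ ((crenorm ζ).1 (y:ℂ)).re
    rw [hval1 x, hval1 y, Complex.ofReal_re, Complex.ofReal_re]
    have hxm := hχmem x hx.1 hx.2
    have hym := hχmem y hy.1 hy.2
    have h1 : lam * y ≤ lam * x := mul_le_mul_of_nonpos_left hxy (le_of_lt hlam)
    have hin : χ (lam * y) ≤ χ (lam * x) :=
      hmξ (hlmem y hy.1 hy.2) (hlmem x hx.1 hx.2) h1
    have hmono := (MONO r (le_refl r) (χ (lam * y)) (χ (lam * x)) hym.1 hin hxm.2).2.1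
    exact div_le_div_of_nonpos_of_le (le_of_lt hlam) hmono
  have hmR2 : ∀ u : ℝ, u ∈ Set.Icc (ψ^[r] b / lam) 0 → lam * u ∈ Set.Icc (0:ℝ) b := by
    intro u hu
    have hrb' : ψ^[r] b ≤ b := (DEC r (le_refl r)).2
    constructor
    · nlinarith [hu.2, le_of_lt hlam]
    · have h2 : lam * u ≤ lam * (ψ^[r] b / lam) := mul_le_mul_of_nonpos_left hu.1 (le_of_lt hlam)
      rw [mul_div_cancel₀ _ hlamne] at h2
      exact le_trans h2 hrb'
  have hmonoR2 : MonotoneOn (fun x : ℝ => ((crenorm ζ).2 (x:ℂ)).re)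
      (Set.Icc (ψ^[r] b / lam) 0) := by
    intro x hx y hy hxy
    show ((crenorm ζ).2 (x:ℂ)).re ≤ ((crenorm ζ).2 (y:ℂ)).re
    rw [hval2 x, hval2 y, Complex.ofReal_re, Complex.ofReal_re]
    have h1 : lam * y ≤ lam * x := mul_le_mul_of_nonpos_left hxy (le_of_lt hlam)
    have hin : ψ (lam * y) ≤ ψ (lam * x) := hmη (hmR2 y hy) (hmR2 x hx) h1
    exact div_le_div_of_nonpos_of_le (le_of_lt hlam) hin
  -- analytic continuation data for the iterate
  set T : Set ℂ := Complex.ofReal '' Set.Icc (ψ b) b with hTdef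
  have hT : ∀ z ∈ T, ∀ j < r, ζ.1^[j] z ∈ Uη ∧ ζ.1^[j] z ≠ 0 := by
    rintro z ⟨x, hx, rfl⟩ j hj
    rw [hiter j x]
    have hj' : j ≤ r := le_of_lt hj
    have hmono := MONO j hj' x x hx.1 (le_refl x) hx.2
    have hpos : 0 < ψ^[j] x := lt_of_lt_of_le (F1 (j+1) (Nat.succ_le_of_lt hj)) hmono.1
    have hub : ψ^[j] x ≤ b := le_trans hmono.2.2 (DEC j hj').2
    refine ⟨hUηsub ⟨ψ^[j] x, ⟨le_of_lt hpos, hub⟩, rfl⟩, ?_⟩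
    exact Complex.ofReal_ne_zero.mpr (ne_of_gt hpos)
  obtain ⟨V, hVo, hTV, hVan, hVd⟩ :=
    iterate_analytic_nonvanishing hUηo hUηan hUηd T r hT
  have hbT : ((b:ℝ):ℂ) ∈ T := ⟨b, ⟨hψb_le, le_refl b⟩, rfl⟩
  have hpbT : ((ψ b : ℝ):ℂ) ∈ T := ⟨ψ b, ⟨le_refl _, hψb_le⟩, rfl⟩
  set W : Set ℂ := (fun z => ζ.1 0 * z) ⁻¹' (Uξ ∩ ζ.2 ⁻¹' V) with hWdef
  have hWo : IsOpen W := by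
    apply IsOpen.preimage (continuous_const.mul continuous_id)
    exact (hUξan.continuousOn).isOpen_inter_preimage hUξo hVo
  have hWmem : ∀ z : ℂ, z ∈ W → ζ.1 0 * z ∈ Uξ ∧ ζ.2 (ζ.1 0 * z) ∈ V := fun z hz => ⟨hz.1, hz.2⟩
  have hWseg : ∀ x : ℝ, 0 ≤ x → x ≤ 1 → ((x:ℝ):ℂ) ∈ W := by
    intro x h0 h1
    have hχm := hχmem x h0 h1
    refine ⟨?_, ?_⟩
    · show ζ.1 0 * (x:ℂ) ∈ Uξ
      rw [hmulre]
      exact hUξsub ⟨lam * x, hlmem x h0 h1, rfl⟩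
    · show ζ.2 (ζ.1 0 * (x:ℂ)) ∈ V
      rw [hmulre, hχval]
      exact hTV ⟨χ (lam * x), ⟨hχm.1, hχm.2⟩, rfl⟩
  have h0W : (0:ℂ) ∈ W := by
    have := hWseg 0 (le_refl 0) zero_le_one
    rwa [Complex.ofReal_zero] at this
  have hf0an : AnalyticOnNhd ℂ (fun z => ζ.2 (ζ.1 0 * z)) W := by
    intro z hz
    exact (hUξan _ (hWmem z hz).1).comp (analyticAt_const.mul analyticAt_id)
  have hmapsW : Set.MapsTo (fun z => ζ.2 (ζ.1 0 * z)) W V := fun z hz => (hWmem z hz).2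
  refine ⟨?_, ?_, ?_, ?_, ?_, ?_, ?_, ?_, ?_, ?_, ?_⟩
  · -- real_η
    rw [hfun1]
    intro z
    simp only
    rw [map_div₀, hconjlam, ← hsη.iterate r, ← hsξ, map_mul, hconjlam]
  · -- real_ξ
    rw [hfun2]
    intro z
    simp only
    rw [map_div₀, hconjlam, ← hsη, map_mul, hconjlam]
  · -- η0_neg
    rw [hR10re]
    exact hAneg
  · -- ξ0_pos
    rw [hR20re]
    exact one_pos
  · -- mono_η
    rw [hR20re]
    exact hmonoR1
  · -- mono_ξ
    rw [hR10re]
    exact hmonoR2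
  · -- map_η
    rw [hR20re, hR20]
    intro x hx
    simp only [Set.mem_Icc]
    constructor
    · simpa using hmonoR1 ⟨le_refl 0, zero_le_one⟩ hx hx.1
    · have := hmonoR1 hx ⟨zero_le_one, le_refl 1⟩ hx.2
      simpa using this
  · -- map_ξ
    rw [hR10re]
    intro x hx
    simp only [Set.mem_Icc]
    constructor
    · rw [hR10]
      simpa using hmonoR2 ⟨le_refl _, le_of_lt hAneg⟩ hx hx.1
    · simpa using hmonoR2 hx ⟨le_of_lt hAneg, le_refl 0⟩ hx.2
  · -- crit_η
    rw [hR20re, hfun1]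
    refine ⟨W, hWo, ?_, ?_, ?_, ?_, ?_, ?_⟩
    · rintro z ⟨x, hx, rfl⟩
      exact hWseg x hx.1 hx.2
    · intro z hz
      have hin : AnalyticAt ℂ (fun w => ζ.2 (ζ.1 0 * w)) z :=
        (hUξan _ (hWmem z hz).1).comp (analyticAt_const.mul analyticAt_id)
      have hout : AnalyticAt ℂ (fun w => ζ.1^[r] (ζ.2 (ζ.1 0 * w))) z :=
        (hVan _ (hWmem z hz).2).comp_of_eq hin rfl
      exact hout.div analyticAt_const hlamCne
    · intro z hz hzne
      have h1 : HasDerivAt (fun w => ζ.2 (ζ.1 0 * w)) (deriv ζ.2 (ζ.1 0 * z) * ζ.1 0) z :=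
        hasDerivAt_comp_const_mul (hUξan _ (hWmem z hz).1).differentiableAt
      have h2 : HasDerivAt (fun w => ζ.1^[r] (ζ.2 (ζ.1 0 * w)))
          (deriv (ζ.1^[r]) (ζ.2 (ζ.1 0 * z)) * (deriv ζ.2 (ζ.1 0 * z) * ζ.1 0)) z :=
        ((hVan _ (hWmem z hz).2).differentiableAt.hasDerivAt).comp z h1
      have h3 := h2.div_const (ζ.1 0)
      rw [h3.deriv]
      exact div_ne_zero (mul_ne_zero (hVd _ (hWmem z hz).2)
        (mul_ne_zero (hUξd _ (hWmem z hz).1 (mul_ne_zero hlamCne hzne)) hlamCne)) hlamCne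
    · obtain ⟨s1, s2, s3⟩ := iteratedDeriv_comp_const_mul3 hUξo hUξan (ζ.1 0) h0Uξ'
      have hf01 : deriv (fun w => ζ.2 (ζ.1 0 * w)) 0 = 0 := by rw [s1, hξ1, zero_mul]
      have hf02 : iteratedDeriv 2 (fun w => ζ.2 (ζ.1 0 * w)) 0 = 0 := by rw [s2, hξ2, zero_mul]
      obtain ⟨c1, c2, c3⟩ := cubic_comp hWo h0W hf0an hVan hmapsW hf01 hf02
      have c1' : deriv (fun z => ζ.1^[r] (ζ.2 (ζ.1 0 * z))) 0 = 0 := c1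
      rw [deriv_div_const, c1', zero_div]
    · obtain ⟨s1, s2, s3⟩ := iteratedDeriv_comp_const_mul3 hUξo hUξan (ζ.1 0) h0Uξ'
      have hf01 : deriv (fun w => ζ.2 (ζ.1 0 * w)) 0 = 0 := by rw [s1, hξ1, zero_mul]
      have hf02 : iteratedDeriv 2 (fun w => ζ.2 (ζ.1 0 * w)) 0 = 0 := by rw [s2, hξ2, zero_mul]
      obtain ⟨c1, c2, c3⟩ := cubic_comp hWo h0W hf0an hVan hmapsW hf01 hf02
      have c2' : iteratedDeriv 2 (fun z => ζ.1^[r] (ζ.2 (ζ.1 0 * z))) 0 = 0 := c2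
      rw [iteratedDeriv_div_const_aux, c2', zero_div]
    · obtain ⟨s1, s2, s3⟩ := iteratedDeriv_comp_const_mul3 hUξo hUξan (ζ.1 0) h0Uξ'
      have hf01 : deriv (fun w => ζ.2 (ζ.1 0 * w)) 0 = 0 := by rw [s1, hξ1, zero_mul]
      have hf02 : iteratedDeriv 2 (fun w => ζ.2 (ζ.1 0 * w)) 0 = 0 := by rw [s2, hξ2, zero_mul]
      obtain ⟨c1, c2, c3⟩ := cubic_comp hWo h0W hf0an hVan hmapsW hf01 hf02
      have c3' : iteratedDeriv 3 (fun z => ζ.1^[r] (ζ.2 (ζ.1 0 * z))) 0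
          = deriv (ζ.1^[r]) (ζ.2 (ζ.1 0 * 0)) * iteratedDeriv 3 (fun w => ζ.2 (ζ.1 0 * w)) 0 := c3
      rw [mul_zero, hξreal] at c3'
      rw [iteratedDeriv_div_const_aux, c3', s3]
      exact div_ne_zero (mul_ne_zero (hVd _ (hTV hbT))
        (mul_ne_zero hξ3 (pow_ne_zero 3 hlamCne))) hlamCne
  · -- crit_ξ
    rw [hR10re, hfun2]
    refine ⟨(fun z => ζ.1 0 * z) ⁻¹' Uη, hUηo.preimage (continuous_const.mul continuous_id),
      ?_, ?_, ?_, ?_, ?_, ?_⟩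
    · rintro z ⟨x, hx, rfl⟩
      show ζ.1 0 * (x:ℂ) ∈ Uη
      rw [hmulre]
      exact hUηsub ⟨lam * x, hmR2 x hx, rfl⟩
    · intro z hz
      exact ((hUηan _ hz).comp (analyticAt_const.mul analyticAt_id)).div analyticAt_const hlamCne
    · intro z hz hzne
      have h1 : HasDerivAt (fun w => ζ.1 (ζ.1 0 * w)) (deriv ζ.1 (ζ.1 0 * z) * ζ.1 0) z :=
        hasDerivAt_comp_const_mul (hUηan _ hz).differentiableAt
      have h2 := h1.div_const (ζ.1 0)
      rw [h2.deriv]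
      exact div_ne_zero (mul_ne_zero (hUηd _ hz (mul_ne_zero hlamCne hzne)) hlamCne) hlamCne
    · obtain ⟨s1, s2, s3⟩ := iteratedDeriv_comp_const_mul3 hUηo hUηan (ζ.1 0) h0Uη'
      rw [deriv_div_const, s1, hη1, zero_mul, zero_div]
    · obtain ⟨s1, s2, s3⟩ := iteratedDeriv_comp_const_mul3 hUηo hUηan (ζ.1 0) h0Uη'
      rw [iteratedDeriv_div_const_aux, s2, hη2, zero_mul, zero_div]
    · obtain ⟨s1, s2, s3⟩ := iteratedDeriv_comp_const_mul3 hUηo hUηan (ζ.1 0) h0Uη'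
      rw [iteratedDeriv_div_const_aux, s3]
      exact div_ne_zero (mul_ne_zero hη3 (pow_ne_zero 3 hlamCne)) hlamCne
  · -- commut
    have hABkey : ∀ x : ℝ,
        (crenorm ζ).1 ((crenorm ζ).2 (x:ℂ)) - (crenorm ζ).2 ((crenorm ζ).1 (x:ℂ))
          = (ζ.1 0)⁻¹ * (ζ.1^[r] (ζ.2 (ζ.1 ((lam * x : ℝ):ℂ)))
              - ζ.1^[r] (ζ.1 (ζ.2 ((lam * x : ℝ):ℂ)))) := by
      intro x
      rw [hfun1, hfun2]
      simp only
      rw [mul_div_cancel₀ _ hlamCne, mul_div_cancel₀ _ hlamCne, hmulre]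
      rw [← Function.iterate_succ_apply' ζ.1 r, Function.iterate_succ_apply ζ.1 r]
      ring
    have hEq : (fun x : ℝ =>
          (crenorm ζ).1 ((crenorm ζ).2 (x:ℂ)) - (crenorm ζ).2 ((crenorm ζ).1 (x:ℂ)))
        = fun x : ℝ => (ζ.1 0)⁻¹ * (ζ.1^[r] (ζ.2 (ζ.1 ((lam * x : ℝ):ℂ)))
              - ζ.1^[r] (ζ.1 (ζ.2 ((lam * x : ℝ):ℂ)))) := funext hABkey
    rw [hEq]
    -- Lipschitz control of the iterate near the common value ζ.2 (ζ.1 0)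
    have hpV : ζ.2 (ζ.1 0) ∈ V := by
      rw [hηreal, hχval, hχlam]
      exact hTV hpbT
    obtain ⟨K, t, htmem, hlip⟩ := ((hVan _ hpV).contDiffAt (n := 1)).exists_lipschitzOnWith
    have t1 : Filter.Tendsto (fun x : ℝ => ((lam * x : ℝ):ℂ)) (𝓝 0) (𝓝 0) := by
      have hcont : Continuous (fun x : ℝ => ((lam * x : ℝ):ℂ)) :=
        Complex.continuous_ofReal.comp (continuous_const.mul continuous_id)
      have := hcont.tendsto 0
      simpa using this
    have t2 : Filter.Tendsto ζ.1 (𝓝 (0:ℂ)) (𝓝 (ζ.1 0)) := (hUηan _ h0Uη').continuousAt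
    have hζ10Uξ : ζ.1 0 ∈ Uξ := by rw [hηreal]; exact hlamUξ
    have hζ20Uη : ζ.2 0 ∈ Uη := by rw [hξreal]; exact hbUη
    have t3 : Filter.Tendsto ζ.2 (𝓝 (ζ.1 0)) (𝓝 (ζ.2 (ζ.1 0))) := (hUξan _ hζ10Uξ).continuousAt
    have t2' : Filter.Tendsto ζ.2 (𝓝 (0:ℂ)) (𝓝 (ζ.2 0)) := (hUξan _ h0Uξ').continuousAt
    have t3' : Filter.Tendsto ζ.1 (𝓝 (ζ.2 0)) (𝓝 (ζ.1 (ζ.2 0))) := (hUηan _ hζ20Uη).continuousAt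
    have hA : Filter.Tendsto (fun x : ℝ => ζ.2 (ζ.1 ((lam * x : ℝ):ℂ))) (𝓝 0)
        (𝓝 (ζ.2 (ζ.1 0))) := t3.comp (t2.comp t1)
    have hB : Filter.Tendsto (fun x : ℝ => ζ.1 (ζ.2 ((lam * x : ℝ):ℂ))) (𝓝 0)
        (𝓝 (ζ.2 (ζ.1 0))) := by
      have := t3'.comp (t2'.comp t1)
      rw [c0] at this
      exact this
    have hbound : ∀ᶠ x : ℝ in 𝓝 0,
        ‖ζ.1^[r] (ζ.2 (ζ.1 ((lam * x : ℝ):ℂ))) - ζ.1^[r] (ζ.1 (ζ.2 ((lam * x : ℝ):ℂ)))‖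
          ≤ (K:ℝ) * ‖ζ.2 (ζ.1 ((lam * x : ℝ):ℂ)) - ζ.1 (ζ.2 ((lam * x : ℝ):ℂ))‖ := by
      filter_upwards [hA.eventually_mem htmem, hB.eventually_mem htmem] with x hAx hBx
      have hd := hlip.dist_le_mul _ hAx _ hBx
      rw [dist_eq_norm, dist_eq_norm] at hd
      exact hd
    have hcomp : Filter.Tendsto (fun x : ℝ => lam * x) (𝓝 0) (𝓝 0) := by
      have := (continuous_mul_left lam).tendsto 0
      simpa only [mul_zero] using this
    have h1 := hcom.comp_tendsto hcomp
    simp only [Function.comp_def] at h1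
    have h2 : (fun x : ℝ => (lam * x)^3) =O[𝓝 (0:ℝ)] fun x : ℝ => x^3 := by
      have hfe : (fun x : ℝ => (lam * x)^3) = fun x : ℝ => lam^3 * x^3 := by
        funext x; ring
      rw [hfe]
      exact (Asymptotics.isBigO_refl (fun x : ℝ => x^3) _).const_mul_left _
    have h3 := h1.trans_isBigO h2
    have h4 : (fun x : ℝ => ζ.2 (ζ.1 ((lam * x : ℝ):ℂ)) - ζ.1 (ζ.2 ((lam * x : ℝ):ℂ)))
        =o[𝓝 (0:ℝ)] fun x : ℝ => x^3 := by
      have := h3.neg_left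
      simpa [neg_sub] using this
    have h5 : (fun x : ℝ => ζ.1^[r] (ζ.2 (ζ.1 ((lam * x : ℝ):ℂ)))
            - ζ.1^[r] (ζ.1 (ζ.2 ((lam * x : ℝ):ℂ))))
        =O[𝓝 (0:ℝ)] (fun x : ℝ => ζ.2 (ζ.1 ((lam * x : ℝ):ℂ)) - ζ.1 (ζ.2 ((lam * x : ℝ):ℂ))) :=
      Asymptotics.IsBigO.of_bound (K:ℝ) hbound
    exact (h5.trans_isLittleO h4).const_mul_left _
end
end

section
/- Let D'⊂ℂ and D⊂ℂ be domains, and let U={g∈C^ω(D'): g(D') is compactly contained in D}. Then the composition operator Comp: C^ω(D)×U→C^ω(D'), Comp(f,g)=f∘g, is Fréchet differentiable, and its differential at (f,g) is given by DComp|_{(f,g)}(φ,γ)=(f'∘g)·γ+φ∘g. -/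
/-
STATEMENT 10.  Let D', D ⊆ ℂ be domains and U = {g ∈ C^ω(D') : g(D') ⋐ D}.
Then the composition operator Comp : C^ω(D) × U → C^ω(D'), (f,g) ↦ f∘g, is
Fréchet differentiable, with differential
DComp|_{(f,g)}(φ,γ) = (f'∘g)·γ + φ∘g.

Here C^ω(W) — the Banach space of bounded holomorphic functions on W with the
sup norm — is realized as the subspace of bounded continuous functions on W
admitting holomorphic extensions.
-/

open Set

noncomputable section

/-- The subspace of `W →ᵇ ℂ` of functions holomorphic on `W`; with the sup
norm this realizes the Banach space `C^ω(W)` of bounded holomorphic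
functions. -/
def Hol (W : Set ℂ) : Submodule ℂ (BoundedContinuousFunction W ℂ) where
  carrier := {f | ∃ g : ℂ → ℂ, DifferentiableOn ℂ g W ∧ ∀ z : W, f z = g z}
  add_mem' := by
    rintro f f' ⟨g, hg, he⟩ ⟨g', hg', he'⟩
    exact ⟨g + g', hg.add hg', fun z => by
      simp [BoundedContinuousFunction.add_apply, he z, he' z]⟩
  zero_mem' := ⟨0, differentiableOn_const 0, fun z => rfl⟩
  smul_mem' := by
    rintro c f ⟨g, hg, he⟩
    exact ⟨c • g, hg.const_smul c, fun z => by
      simp [BoundedContinuousFunction.smul_apply, he z]⟩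

/-- The Banach space `C^ω(W)`. -/
abbrev Cw (W : Set ℂ) := ↥(Hol W)

/-- `g(D') ⋐ D`: the image of `g` is compactly contained in `D`.  (The set of
such `g` is the open set `U ⊆ C^ω(D')` of the statement.) -/
def CompactlyInto (D D' : Set ℂ) (g : Cw D') : Prop :=
  ∃ K : Set ℂ, IsCompact K ∧ K ⊆ D ∧ ∀ z : D', g.val z ∈ K

open scoped Classical in
/-- The composition operator `Comp(f, g) = f ∘ g` on
`C^ω(D) × C^ω(D') → C^ω(D')` (defined by choice on the locus where the
composition exists, and arbitrarily elsewhere). -/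
def compOp (D D' : Set ℂ) (fg : Cw D × Cw D') : Cw D' :=
  if h : ∃ c : Cw D', ∀ z : D',
      ∃ hz : fg.2.val z ∈ D, c.val z = fg.1.val ⟨fg.2.val z, hz⟩
  then h.choose else 0

namespace CompAux
open Metric

lemma mem_cthickening_of_dist' {K : Set ℂ} {a b : ℝ} (ha : 0 ≤ a) (hb : 0 ≤ b) {u z : ℂ}
    (hu : u ∈ cthickening a K) (hz : dist z u ≤ b) : z ∈ cthickening (a + b) K := by
  rw [mem_cthickening_iff] at hu ⊢
  calc EMetric.infEdist z K ≤ EMetric.infEdist u K + edist z u :=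
        EMetric.infEdist_le_infEdist_add_edist
    _ ≤ ENNReal.ofReal a + ENNReal.ofReal b := by
        gcongr
        · exact hu
        · rw [edist_dist]; exact ENNReal.ofReal_le_ofReal hz
    _ = ENNReal.ofReal (a + b) := by rw [ENNReal.ofReal_add ha hb]

lemma cauchy_deriv_bound {F : ℂ → ℂ} {S : Set ℂ} (hF : DifferentiableOn ℂ F S)
    {M : ℝ} {c : ℂ} {s : ℝ} (hs : 0 < s) (hball : closedBall c s ⊆ S)
    (hM : ∀ z ∈ sphere c s, ‖F z‖ ≤ M) :
    ‖deriv F c‖ ≤ M / s := by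
  apply Complex.norm_deriv_le_of_forall_mem_sphere_norm_le hs _ hM
  constructor
  · exact hF.mono ((ball_subset_closedBall).trans hball)
  · rw [closure_ball c hs.ne']
    exact hF.continuousOn.mono hball

lemma deriv_congr_on {S : Set ℂ} (hS : IsOpen S) {F₁ F₂ : ℂ → ℂ}
    (h : ∀ z ∈ S, F₁ z = F₂ z) {w : ℂ} (hw : w ∈ S) : deriv F₁ w = deriv F₂ w :=
  Filter.EventuallyEq.deriv_eq (Filter.eventuallyEq_of_mem (hS.mem_nhds hw) h)

lemma Cw.ext' {W : Set ℂ} {a b : Cw W} (h : ∀ z : W, a.val z = b.val z) : a = b :=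
  Subtype.ext (BoundedContinuousFunction.ext h)

/-- canonical holomorphic extension -/
def cext {W : Set ℂ} (a : Cw W) : ℂ → ℂ := a.2.choose

lemma cext_diff {W : Set ℂ} (a : Cw W) : DifferentiableOn ℂ (cext a) W := a.2.choose_spec.1

lemma cext_eq {W : Set ℂ} (a : Cw W) (z : W) : a.val z = cext a z := a.2.choose_spec.2 z

lemma cext_eq' {W : Set ℂ} (a : Cw W) {z : ℂ} (hz : z ∈ W) : a.val ⟨z, hz⟩ = cext a z :=
  a.2.choose_spec.2 ⟨z, hz⟩

variable {D D' : Set ℂ}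

lemma Cw.norm_def {W : Set ℂ} (a : Cw W) : ‖a‖ = ‖a.val‖ := rfl

lemma Cw.norm_apply_le {W : Set ℂ} (a : Cw W) (z : W) : ‖a.val z‖ ≤ ‖a‖ :=
  a.val.norm_coe_le_norm z

lemma Cw.add_apply {W : Set ℂ} (a b : Cw W) (z : W) : (a + b).val z = a.val z + b.val z := rfl
lemma Cw.sub_apply {W : Set ℂ} (a b : Cw W) (z : W) : (a - b).val z = a.val z - b.val z := rfl
lemma Cw.smul_apply {W : Set ℂ} (c : ℂ) (a : Cw W) (z : W) : (c • a).val z = c * a.val z := rfl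

/-- composition element `a ∘ b` of `Cw D'` -/
def compEl (a : Cw D) (b : Cw D') (hb : ∀ z : D', b.val z ∈ D) : Cw D' :=
  ⟨BoundedContinuousFunction.ofNormedAddCommGroup
      (fun z => a.val ⟨b.val z, hb z⟩)
      (a.val.continuous.comp (Continuous.subtype_mk b.val.continuous _))
      ‖a.val‖ (fun z => a.val.norm_coe_le_norm _),
   ⟨cext a ∘ cext b,
    (cext_diff a).comp (cext_diff b) (fun z hz => by
      rw [← cext_eq' b hz]; exact hb ⟨z, hz⟩),
    fun z => by
      show a.val ⟨b.val z, hb z⟩ = cext a (cext b z)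
      rw [cext_eq' a (hb z)]
      congr 1
      exact cext_eq b z⟩⟩

lemma compEl_apply (a : Cw D) (b : Cw D') (hb : ∀ z : D', b.val z ∈ D) (z : D') :
    (compEl a b hb).val z = a.val ⟨b.val z, hb z⟩ := rfl

lemma compOp_eq (a : Cw D) (b : Cw D') (hb : ∀ z : D', b.val z ∈ D) :
    compOp D D' (a, b) = compEl a b hb := by
  have hex : ∃ c : Cw D', ∀ z : D',
      ∃ hz : (a, b).2.val z ∈ D, c.val z = (a, b).1.val ⟨(a, b).2.val z, hz⟩ :=
    ⟨compEl a b hb, fun z => ⟨hb z, rfl⟩⟩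
  rw [compOp, dif_pos hex]
  apply Cw.ext'
  intro z
  obtain ⟨hz, h⟩ := hex.choose_spec z
  rw [h, compEl_apply]

def derivEl (hD : IsOpen D) {F : ℂ → ℂ} (hF : DifferentiableOn ℂ F D)
    (g : Cw D') (hgD : ∀ z : D', g.val z ∈ D) {C : ℝ}
    (hC : ∀ z : D', ‖deriv F (g.val z)‖ ≤ C) (γ : Cw D') : Cw D' :=
  ⟨BoundedContinuousFunction.ofNormedAddCommGroup
      (fun z => deriv F (g.val z) * γ.val z)
      (by
        have hFd : DifferentiableOn ℂ (deriv F) D :=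
          ((hF.analyticOnNhd hD).deriv).differentiableOn
        exact (hFd.continuousOn.comp_continuous g.val.continuous hgD).mul γ.val.continuous)
      (C * ‖γ.val‖)
      (fun z => by
        rw [norm_mul]
        exact mul_le_mul (hC z) (γ.val.norm_coe_le_norm z) (norm_nonneg _)
          (le_trans (norm_nonneg _) (hC z))),
   ⟨(fun w => deriv F w) ∘ cext g * cext γ,
    by
      have hFd : DifferentiableOn ℂ (deriv F) D :=
        ((hF.analyticOnNhd hD).deriv).differentiableOn
      exact (hFd.comp (cext_diff g) (fun z hz => by
        rw [← cext_eq' g hz]; exact hgD ⟨z, hz⟩)).mul (cext_diff γ),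
    fun z => by
      show deriv F (g.val z) * γ.val z = deriv F (cext g z) * cext γ z
      rw [← cext_eq g z, ← cext_eq γ z]⟩⟩

lemma derivEl_apply (hD : IsOpen D) {F : ℂ → ℂ} (hF : DifferentiableOn ℂ F D)
    (g : Cw D') (hgD : ∀ z : D', g.val z ∈ D) {C : ℝ}
    (hC : ∀ z : D', ‖deriv F (g.val z)‖ ≤ C) (γ : Cw D') (z : D') :
    (derivEl hD hF g hgD hC γ).val z = deriv F (g.val z) * γ.val z := rfl

def Lmap (hD : IsOpen D) {F : ℂ → ℂ} (hF : DifferentiableOn ℂ F D)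
    (g : Cw D') (hgD : ∀ z : D', g.val z ∈ D) {C : ℝ} (hC0 : 0 ≤ C)
    (hC : ∀ z : D', ‖deriv F (g.val z)‖ ≤ C) :
    Cw D × Cw D' →L[ℂ] Cw D' :=
  LinearMap.mkContinuous
    { toFun := fun p => derivEl hD hF g hgD hC p.2 + compEl p.1 g hgD
      map_add' := fun p q => by
        apply Cw.ext'
        intro z
        simp only [Cw.add_apply, derivEl_apply, compEl_apply, Prod.fst_add, Prod.snd_add]
        ring
      map_smul' := fun c p => by
        apply Cw.ext'
        intro z
        simp only [Cw.add_apply, Cw.smul_apply, derivEl_apply, compEl_apply,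
          Prod.smul_fst, Prod.smul_snd, RingHom.id_apply]
        ring }
    (C + 1)
    (fun p => by
      simp only [LinearMap.coe_mk, AddHom.coe_mk]
      refine le_trans (norm_add_le _ _) ?_
      have h1 : ‖derivEl hD hF g hgD hC p.2‖ ≤ C * ‖p.2‖ := by
        rw [Cw.norm_def]
        refine (BoundedContinuousFunction.norm_le (by positivity)).2 fun z => ?_
        rw [derivEl_apply, norm_mul]
        exact mul_le_mul (hC z) (Cw.norm_apply_le p.2 z) (norm_nonneg _) hC0
      have h2 : ‖compEl p.1 g hgD‖ ≤ ‖p.1‖ := by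
        rw [Cw.norm_def]
        refine (BoundedContinuousFunction.norm_le (norm_nonneg _)).2 fun z => ?_
        rw [compEl_apply]
        exact Cw.norm_apply_le p.1 _
      calc ‖derivEl hD hF g hgD hC p.2‖ + ‖compEl p.1 g hgD‖
          ≤ C * ‖p.2‖ + ‖p.1‖ := add_le_add h1 h2
        _ ≤ C * ‖p‖ + ‖p‖ := add_le_add
            (mul_le_mul_of_nonneg_left (norm_snd_le p) hC0) (norm_fst_le p)
        _ = (C + 1) * ‖p‖ := by ring)

lemma Lmap_apply (hD : IsOpen D) {F : ℂ → ℂ} (hF : DifferentiableOn ℂ F D)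
    (g : Cw D') (hgD : ∀ z : D', g.val z ∈ D) {C : ℝ} (hC0 : 0 ≤ C)
    (hC : ∀ z : D', ‖deriv F (g.val z)‖ ≤ C) (φ : Cw D) (γ : Cw D') (z : D') :
    ((Lmap hD hF g hgD hC0 hC) (φ, γ)).val z
      = deriv F (g.val z) * γ.val z + φ.val ⟨g.val z, hgD z⟩ := rfl

end CompAux

open CompAux Metric


set_option maxHeartbeats 2000000 in
theorem composition_operator_frechet_differentiable
    (D D' : Set ℂ) (hD : IsOpen D) (hD' : IsOpen D')
    (hDconn : IsConnected D) (hD'conn : IsConnected D')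
    (f : Cw D) (g : Cw D') (hg : CompactlyInto D D' g) :
    ∃ L : Cw D × Cw D' →L[ℂ] Cw D',
      -- Comp is Fréchet differentiable at (f,g) with differential L:
      HasFDerivAt (compOp D D') L (f, g) ∧
      -- L is given by the formula (φ,γ) ↦ (f'∘g)·γ + φ∘g :
      (∀ (φ : Cw D) (γ : Cw D') (F Φ : ℂ → ℂ),
        DifferentiableOn ℂ F D → (∀ z : D, f.val z = F z) →
        DifferentiableOn ℂ Φ D → (∀ z : D, φ.val z = Φ z) →
        ∀ z : D', (L (φ, γ)).val z = deriv F (g.val z) * γ.val z + Φ (g.val z)) := by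
  obtain ⟨K, hK, hKD, hgK⟩ := hg
  obtain ⟨δ, hδ, hδD⟩ := hK.exists_cthickening_subset_open hD hKD
  set r : ℝ := δ / 4 with hrdef
  have hr : 0 < r := by positivity
  have hsub : ∀ {s : ℝ}, s ≤ δ → cthickening s K ⊆ D :=
    fun h2 => (cthickening_mono h2 K).trans hδD
  have hgD : ∀ z : D', g.val z ∈ D := fun z => hKD (hgK z)
  have hKc : ∀ {s : ℝ}, 0 ≤ s → K ⊆ cthickening s K := fun _ => self_subset_cthickening K
  -- value bound for extensions
  have hval : ∀ (a : Cw D) (z : ℂ), z ∈ D → ‖cext a z‖ ≤ ‖a‖ := fun a z hz => by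
    rw [← cext_eq' a hz]; exact Cw.norm_apply_le a _
  -- Cauchy estimate for first derivatives on cthickening (2r)
  have key1 : ∀ (a : Cw D), ∀ u ∈ cthickening (2 * r) K, ‖deriv (cext a) u‖ ≤ ‖a‖ / r := by
    intro a u hu
    refine cauchy_deriv_bound (cext_diff a) hr ?_ ?_
    · intro z hz
      have : z ∈ cthickening (2 * r + r) K :=
        mem_cthickening_of_dist' (by positivity) hr.le hu (mem_closedBall.1 hz)
      exact hsub (by rw [hrdef]; linarith) this
    · intro z hz
      refine hval a z ?_
      have : z ∈ cthickening (2 * r + r) K :=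
        mem_cthickening_of_dist' (by positivity) hr.le hu (le_of_eq (mem_sphere.1 hz))
      exact hsub (by rw [hrdef]; linarith) this
  set F : ℂ → ℂ := cext f with hF
  have hFdiff : DifferentiableOn ℂ F D := cext_diff f
  have hFd : DifferentiableOn ℂ (deriv F) D := ((hFdiff.analyticOnNhd hD).deriv).differentiableOn
  -- Cauchy estimate for the second derivative on cthickening r
  have key2 : ∀ u ∈ cthickening r K, ‖deriv (deriv F) u‖ ≤ ‖f‖ / r / r := by
    intro u hu
    refine cauchy_deriv_bound hFd hr ?_ ?_
    · intro z hz
      have : z ∈ cthickening (r + r) K :=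
        mem_cthickening_of_dist' hr.le hr.le hu (mem_closedBall.1 hz)
      exact hsub (by rw [hrdef]; linarith) this
    · intro z hz
      have h2 : z ∈ cthickening (r + r) K :=
        mem_cthickening_of_dist' hr.le hr.le hu (le_of_eq (mem_sphere.1 hz))
      have : (r + r) = 2 * r := by ring
      rw [this] at h2
      exact key1 f z h2
  have hballD : ∀ w ∈ K, closedBall w r ⊆ D := by
    intro w hw z hz
    have : z ∈ cthickening (0 + r) K :=
      mem_cthickening_of_dist' le_rfl hr.le (hKc le_rfl hw) (mem_closedBall.1 hz)
    rw [zero_add] at this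
    exact hsub (by rw [hrdef]; linarith) this
  have hballth : ∀ w ∈ K, closedBall w r ⊆ cthickening r K := by
    intro w hw z hz
    have : z ∈ cthickening (0 + r) K :=
      mem_cthickening_of_dist' le_rfl hr.le (hKc le_rfl hw) (mem_closedBall.1 hz)
    rwa [zero_add] at this
  -- Lipschitz bound for deriv F near K
  have key3 : ∀ w ∈ K, ∀ u ∈ closedBall w r, ∀ v ∈ closedBall w r,
      ‖deriv F u - deriv F v‖ ≤ (‖f‖ / r / r) * ‖u - v‖ := by
    intro w hw u hu v hv
    refine Convex.norm_image_sub_le_of_norm_deriv_le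
      (fun x hx => hFd.differentiableAt (hD.mem_nhds (hballD w hw hx)))
      (fun x hx => key2 x (hballth w hw hx)) (convex_closedBall w r) hv hu
  -- second order Taylor estimate
  have key4 : ∀ w ∈ K, ∀ ζ : ℂ, ‖ζ‖ ≤ r →
      ‖F (w + ζ) - F w - deriv F w * ζ‖ ≤ (‖f‖ / r / r) * (‖ζ‖ * ‖ζ‖) := by
    intro w hw ζ hζ
    have hwin : w ∈ closedBall w ‖ζ‖ := mem_closedBall_self (norm_nonneg _)
    have hwζ : w + ζ ∈ closedBall w ‖ζ‖ := by
      rw [mem_closedBall, dist_eq_norm]; simp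
    have hsubball : closedBall w ‖ζ‖ ⊆ closedBall w r := closedBall_subset_closedBall hζ
    have hmvt := Convex.norm_image_sub_le_of_norm_hasDerivWithin_le
      (f := fun u => F u - deriv F w * u) (f' := fun u => deriv F u - deriv F w)
      (s := closedBall w ‖ζ‖) (C := (‖f‖ / r / r) * ‖ζ‖)
      (fun x hx => by
        have h1 : HasDerivAt F (deriv F x) x :=
          (hFdiff.differentiableAt (hD.mem_nhds (hballD w hw (hsubball hx)))).hasDerivAt
        have h2 : HasDerivAt (fun u : ℂ => deriv F w * u) (deriv F w) x := by
          simpa using (hasDerivAt_id x).const_mul (deriv F w)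
        exact (h1.sub h2).hasDerivWithinAt)
      (fun x hx => by
        calc ‖deriv F x - deriv F w‖ ≤ (‖f‖ / r / r) * ‖x - w‖ :=
              key3 w hw x (hsubball hx) w (mem_closedBall_self hr.le)
          _ ≤ (‖f‖ / r / r) * ‖ζ‖ := by
              have hb : ‖x - w‖ ≤ ‖ζ‖ := by
                rw [← dist_eq_norm]; exact mem_closedBall.1 hx
              have h0 : (0:ℝ) ≤ ‖f‖ / r / r := by positivity
              exact mul_le_mul_of_nonneg_left hb h0)
      (convex_closedBall w ‖ζ‖) hwin hwζ
    have heq : F (w + ζ) - deriv F w * (w + ζ) - (F w - deriv F w * w)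
        = F (w + ζ) - F w - deriv F w * ζ := by ring
    rw [heq] at hmvt
    have : ‖w + ζ - w‖ = ‖ζ‖ := by simp
    rw [this] at hmvt
    calc ‖F (w + ζ) - F w - deriv F w * ζ‖ ≤ (‖f‖ / r / r) * ‖ζ‖ * ‖ζ‖ := hmvt
      _ = (‖f‖ / r / r) * (‖ζ‖ * ‖ζ‖) := by ring
  -- Lipschitz estimate for arbitrary elements
  have key5 : ∀ (a : Cw D), ∀ w ∈ K, ∀ ζ : ℂ, ‖ζ‖ ≤ r →
      ‖cext a (w + ζ) - cext a w‖ ≤ (‖a‖ / r) * ‖ζ‖ := by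
    intro a w hw ζ hζ
    have hwζ : w + ζ ∈ closedBall w r := by
      rw [mem_closedBall, dist_eq_norm]; simpa using hζ
    have := Convex.norm_image_sub_le_of_norm_deriv_le
      (f := cext a) (C := ‖a‖ / r) (s := closedBall w r)
      (fun x hx => (cext_diff a).differentiableAt (hD.mem_nhds (hballD w hw hx)))
      (fun x hx => by
        have h2 : x ∈ cthickening (2 * r) K := by
          have := hballth w hw hx
          exact cthickening_mono (by linarith) K this
        exact key1 a x h2)
      (convex_closedBall w r) (mem_closedBall_self hr.le) hwζ
    calc ‖cext a (w + ζ) - cext a w‖ ≤ (‖a‖ / r) * ‖w + ζ - w‖ := this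
      _ = (‖a‖ / r) * ‖ζ‖ := by simp
  -- the derivative bound along g
  have hC : ∀ z : D', ‖deriv F (g.val z)‖ ≤ ‖f‖ / r :=
    fun z => key1 f (g.val z) (hKc (by positivity) (hgK z))
  have hC0 : (0:ℝ) ≤ ‖f‖ / r := by positivity
  refine ⟨Lmap hD hFdiff g hgD hC0 hC, ?_, ?_⟩
  · -- differentiability
    rw [hasFDerivAt_iff_isLittleO_nhds_zero]
    set Ctot : ℝ := ‖f‖ / r / r + 1 / r with hCtot
    have hCtot0 : 0 < Ctot := by positivity
    have main : ∀ h : Cw D × Cw D', ‖h‖ ≤ r →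
        ‖compOp D D' ((f, g) + h) - compOp D D' (f, g) - Lmap hD hFdiff g hgD hC0 hC h‖
          ≤ Ctot * (‖h‖ * ‖h‖) := by
      intro h hh
      obtain ⟨φ, γ⟩ := h
      have hγ : ‖γ‖ ≤ r := le_trans (norm_snd_le (φ, γ)) hh
      have hφ : ‖φ‖ ≤ ‖(φ, γ)‖ := norm_fst_le (φ, γ)
      have hγh : ‖γ‖ ≤ ‖(φ, γ)‖ := norm_snd_le (φ, γ)
      have hgγD : ∀ z : D', (g + γ).val z ∈ D := by
        intro z
        rw [Cw.add_apply]
        have hm : g.val z + γ.val z ∈ cthickening (0 + r) K := by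
          refine mem_cthickening_of_dist' le_rfl hr.le (hKc le_rfl (hgK z)) ?_
          rw [dist_eq_norm]
          simpa using le_trans (Cw.norm_apply_le γ z) hγ
        rw [zero_add] at hm
        exact hsub (by rw [hrdef]; linarith) hm
      have e1 : (f, g) + (φ, γ) = (f + φ, g + γ) := rfl
      rw [e1, compOp_eq (f + φ) (g + γ) hgγD, compOp_eq f g hgD]
      rw [Cw.norm_def]
      refine (BoundedContinuousFunction.norm_le (by positivity)).2 fun z => ?_
      set w : ℂ := g.val z with hwdef
      set ζ : ℂ := γ.val z with hζdef
      have hζr : ‖ζ‖ ≤ r := le_trans (Cw.norm_apply_le γ z) hγ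
      have hζh : ‖ζ‖ ≤ ‖(φ, γ)‖ := le_trans (Cw.norm_apply_le γ z) hγh
      have hv1 : (compEl (f + φ) (g + γ) hgγD).val z = F (w + ζ) + cext φ (w + ζ) := by
        rw [compEl_apply]
        have hwD : (g + γ).val z ∈ D := hgγD z
        have : (f + φ).val ⟨(g + γ).val z, hwD⟩
            = f.val ⟨(g + γ).val z, hwD⟩ + φ.val ⟨(g + γ).val z, hwD⟩ := rfl
        rw [this, cext_eq' f hwD, cext_eq' φ hwD]
        congr 2 <;> exact Cw.add_apply g γ z
      have hv2 : (compEl f g hgD).val z = F w := by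
        rw [compEl_apply, cext_eq' f (hgD z)]
      have hv3 : ((Lmap hD hFdiff g hgD hC0 hC) (φ, γ)).val z
          = deriv F w * ζ + cext φ w := by
        rw [Lmap_apply, cext_eq' φ (hgD z)]
      rw [Cw.sub_apply, Cw.sub_apply, hv1, hv2, hv3]
      have heq : F (w + ζ) + cext φ (w + ζ) - F w - (deriv F w * ζ + cext φ w)
          = (F (w + ζ) - F w - deriv F w * ζ) + (cext φ (w + ζ) - cext φ w) := by ring
      rw [heq]
      calc ‖(F (w + ζ) - F w - deriv F w * ζ) + (cext φ (w + ζ) - cext φ w)‖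
          ≤ ‖F (w + ζ) - F w - deriv F w * ζ‖ + ‖cext φ (w + ζ) - cext φ w‖ :=
            norm_add_le _ _
        _ ≤ (‖f‖ / r / r) * (‖ζ‖ * ‖ζ‖) + (‖φ‖ / r) * ‖ζ‖ :=
            add_le_add (key4 w (hgK z) ζ hζr) (key5 φ w (hgK z) ζ hζr)
        _ ≤ (‖f‖ / r / r) * (‖(φ, γ)‖ * ‖(φ, γ)‖) + (‖(φ, γ)‖ / r) * ‖(φ, γ)‖ := by
            gcongr <;> first | exact hζh | exact hφ | positivity
        _ = Ctot * (‖(φ, γ)‖ * ‖(φ, γ)‖) := by rw [hCtot]; ring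
    rw [Asymptotics.isLittleO_iff]
    intro ε hε
    have hs : (0:ℝ) < min r (ε / Ctot) := lt_min hr (by positivity)
    filter_upwards [Metric.ball_mem_nhds (0 : Cw D × Cw D') hs] with h hmem
    rw [mem_ball_zero_iff] at hmem
    have hhr : ‖h‖ ≤ r := le_trans hmem.le (min_le_left _ _)
    have hhε : ‖h‖ ≤ ε / Ctot := le_trans hmem.le (min_le_right _ _)
    calc ‖compOp D D' ((f, g) + h) - compOp D D' (f, g) - Lmap hD hFdiff g hgD hC0 hC h‖
        ≤ Ctot * (‖h‖ * ‖h‖) := main h hhr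
      _ = (Ctot * ‖h‖) * ‖h‖ := by ring
      _ ≤ ε * ‖h‖ := by
          have : Ctot * ‖h‖ ≤ ε := by
            calc Ctot * ‖h‖ ≤ Ctot * (ε / Ctot) :=
                  mul_le_mul_of_nonneg_left hhε hCtot0.le
              _ = ε := by field_simp
          exact mul_le_mul_of_nonneg_right this (norm_nonneg _)
  · -- the formula
    intro φ γ F₂ Φ₂ hF₂ he₂ hΦ₂ hΦe₂ z
    rw [Lmap_apply]
    congr 1
    · congr 1
      refine deriv_congr_on hD (fun u hu => ?_) (hgD z)
      rw [hF, ← cext_eq' f hu]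
      exact he₂ ⟨u, hu⟩
    · exact hΦe₂ ⟨g.val z, hgD z⟩
end
end
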